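/- arXiv:2110.10614 — 2 statements merged into one kernel-verified Lean document; each statement's English description precedes it below -/
import Mathlib

section
/- If two parameter vectors θ and θ' satisfy ‖θ - θ'‖_∞ ≤ δ, then for every action a, π_θ(a) ≥ (1 - 2δ) · π_θ'(a). -/
noncomputable def softmax {A : Type*} [Fintype A] (θ : A → ℝ) (a : A) : ℝ :=
  Real.exp (θ a) / ∑ a' : A, Real.exp (θ a')

theorem softmax_lower_bound {A : Type*} [Fintype A] [Nonempty A]
    (θ θ' : A → ℝ) (δ : ℝ)
    (h : ∀ a, |θ a - θ' a| ≤ δ) :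
    ∀ a, softmax θ a ≥ (1 - 2 * δ) * softmax θ' a := by
  intro a
  have hS' : 0 < ∑ a' : A, Real.exp (θ' a') :=
    Finset.sum_pos (fun i _ => Real.exp_pos _) Finset.univ_nonempty
  have hS : 0 < ∑ a' : A, Real.exp (θ a') :=
    Finset.sum_pos (fun i _ => Real.exp_pos _) Finset.univ_nonempty
  have hnum : Real.exp (θ' a - δ) ≤ Real.exp (θ a) := by
    apply Real.exp_le_exp.2
    have := (abs_le.1 (h a)).1
    linarith
  have hden : (∑ a' : A, Real.exp (θ a')) ≤ Real.exp δ * ∑ a' : A, Real.exp (θ' a') := by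
    rw [Finset.mul_sum]
    apply Finset.sum_le_sum
    intro i _
    rw [← Real.exp_add]
    apply Real.exp_le_exp.2
    have := (abs_le.1 (h i)).2
    linarith
  have key : Real.exp (θ' a - δ) / (Real.exp δ * ∑ a' : A, Real.exp (θ' a'))
      ≤ softmax θ a := by
    unfold softmax
    exact div_le_div₀ (Real.exp_pos _).le hnum hS hden
  have hrw : Real.exp (θ' a - δ) / (Real.exp δ * ∑ a' : A, Real.exp (θ' a'))
      = Real.exp (-(2*δ)) * softmax θ' a := by
    unfold softmax
    rw [Real.exp_sub, Real.exp_neg]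
    have h1 : Real.exp (2*δ) = Real.exp δ * Real.exp δ := by
      rw [← Real.exp_add]; ring_nf
    have hd := Real.exp_pos δ
    field_simp [h1]
    ring_nf; rw [sq, ← Real.exp_add]; ring_nf
  have hlin : 1 - 2*δ ≤ Real.exp (-(2*δ)) := by
    have := Real.add_one_le_exp (-(2*δ)); linarith
  have hsm' : 0 ≤ softmax θ' a := div_nonneg (Real.exp_pos _).le hS'.le
  calc (1 - 2*δ) * softmax θ' a ≤ Real.exp (-(2*δ)) * softmax θ' a :=
        mul_le_mul_of_nonneg_right hlin hsm'
    _ = Real.exp (θ' a - δ) / (Real.exp δ * ∑ a' : A, Real.exp (θ' a')) := hrw.symm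
    _ ≤ softmax θ a := key
end

section
/- In a congestion game with edge set E, load functions, and potential Φ(a) = Σ_e Σ_{k=1}^{l_e(a)} c_e(k) where l_e(a) is the number of players whose action uses edge e, for any player i and any two actions a_i, a_i' (with other players' actions a_{-i} fixed), Φ(a_i, a_{-i}) - Φ(a_i', a_{-i}) = C_i(a_i, a_{-i}) - C_i(a_i', a_{-i}), where C_i(a) = Σ_{e ∈ a_i} c_e(l_e(a)) is player i's cost. -/
open Finset

variable {E : Type*} [Fintype E] [DecidableEq E]

/-- Load of edge `e` under joint action `a`. -/
def load (n : ℕ) (a : Fin n → Finset E) (e : E) : ℕ :=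
  (Finset.univ.filter fun i : Fin n => e ∈ a i).card

/-- Cost of player `i` under joint action `a`. -/
def playerCost (n : ℕ) (c : E → ℕ → ℝ) (a : Fin n → Finset E) (i : Fin n) : ℝ :=
  ∑ e ∈ a i, c e (load n a e)

/-- Rosenthal potential. -/
def rosenthalPotential (n : ℕ) (c : E → ℕ → ℝ) (a : Fin n → Finset E) : ℝ :=
  ∑ e : E, ∑ k ∈ Finset.Icc 1 (load n a e), c e k

/-- Load of everyone except player `i`. -/
def restLoad (n : ℕ) (a : Fin n → Finset E) (i : Fin n) (e : E) : ℕ :=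
  ∑ j ∈ Finset.univ \ {i}, if e ∈ a j then 1 else 0

lemma load_update (n : ℕ) (a : Fin n → Finset E) (i : Fin n) (b : Finset E) (e : E) :
    load n (Function.update a i b) e = restLoad n a i e + (if e ∈ b then 1 else 0) := by
  classical
  have h : load n (Function.update a i b) e
      = ∑ j : Fin n, (fun s : Finset E => if e ∈ s then 1 else 0) (Function.update a i b j) := by
    rw [load, Finset.card_filter]
  rw [h]
  have h2 : (fun j => (fun s : Finset E => if e ∈ s then 1 else 0) (Function.update a i b j))
      = Function.update ((fun s : Finset E => if e ∈ s then 1 else 0) ∘ a) i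
        (if e ∈ b then 1 else 0) := by
    ext j
    rcases eq_or_ne j i with hj | hj
    · subst hj; simp
    · simp [Function.update_of_ne hj]
  rw [h2, Finset.sum_update_of_mem (Finset.mem_univ i)]
  simp [restLoad, add_comm]

lemma potential_update (n : ℕ) (c : E → ℕ → ℝ) (a : Fin n → Finset E) (i : Fin n)
    (b : Finset E) :
    rosenthalPotential n c (Function.update a i b) =
      (∑ e : E, ∑ k ∈ Finset.Icc 1 (restLoad n a i e), c e k) +
        ∑ e ∈ b, c e (restLoad n a i e + 1) := by
  classical
  have : ∑ e ∈ b, c e (restLoad n a i e + 1)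
      = ∑ e : E, if e ∈ b then c e (restLoad n a i e + 1) else 0 := by
    rw [Finset.sum_ite_mem, Finset.univ_inter]
  rw [rosenthalPotential, this, ← Finset.sum_add_distrib]
  refine Finset.sum_congr rfl fun e _ => ?_
  rw [load_update]
  by_cases he : e ∈ b
  · simp only [he, if_true]
    rw [Finset.sum_Icc_succ_top (Nat.le_add_left 1 _)]
  · simp [he]

lemma playerCost_update (n : ℕ) (c : E → ℕ → ℝ) (a : Fin n → Finset E) (i : Fin n)
    (b : Finset E) :
    playerCost n c (Function.update a i b) i = ∑ e ∈ b, c e (restLoad n a i e + 1) := by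
  rw [playerCost, Function.update_self]
  refine Finset.sum_congr rfl fun e he => ?_
  rw [load_update]
  simp [he]

theorem rosenthal_potential_property (n : ℕ) (c : E → ℕ → ℝ)
    (a : Fin n → Finset E) (i : Fin n) (ai ai' : Finset E) :
    rosenthalPotential n c (Function.update a i ai) -
      rosenthalPotential n c (Function.update a i ai') =
    playerCost n c (Function.update a i ai) i -
      playerCost n c (Function.update a i ai') i := by
  rw [potential_update, potential_update, playerCost_update, playerCost_update]
  ring
end
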